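/- For a quaternionic square matrix P, a complex number λ is a right eigenvalue of P if and only if λ is an eigenvalue of the complex representation χ(P). -/

import Mathlib

noncomputable section
open Matrix Polynomial

abbrev Hq := Quaternion ℝ

def toH (z : ℂ) : Hq := ⟨z.re, z.im, 0, 0⟩

def toC1 (q : Hq) : ℂ := ⟨q.re, q.imI⟩
def toC2 (q : Hq) : ℂ := ⟨q.imJ, q.imK⟩

def chi {m : ℕ} (P : Matrix (Fin m) (Fin m) Hq) :
    Matrix (Fin m ⊕ Fin m) (Fin m ⊕ Fin m) ℂ :=
  Matrix.fromBlocks (P.map toC1) (P.map toC2)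
    (-(P.map fun q => star (toC2 q))) (P.map fun q => star (toC1 q))

def ofC (z w : ℂ) : Hq := ⟨z.re, z.im, w.re, w.im⟩
@[simp] lemma toC1_ofC (z w : ℂ) : toC1 (ofC z w) = z := by simp [toC1, ofC]
@[simp] lemma toC2_ofC (z w : ℂ) : toC2 (ofC z w) = w := by simp [toC2, ofC]
lemma eq_zero_of_toC (q : Hq) (h1 : toC1 q = 0) (h2 : toC2 q = 0) : q = 0 := by
  simp [toC1, toC2, Complex.ext_iff] at h1 h2
  ext <;> simp [h1.1, h1.2, h2.1, h2.2] <;> rfl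
lemma toC_ext {p q : Hq} (h1 : toC1 p = toC1 q) (h2 : toC2 p = toC2 q) : p = q := by
  simp only [toC1, toC2, Complex.ext_iff] at h1 h2
  ext
  exacts [h1.1, h1.2, h2.1, h2.2]
lemma toC1_mul (p q : Hq) : toC1 (p*q) = toC1 p * toC1 q - toC2 p * star (toC2 q) := by
  apply Complex.ext <;> simp [toC1, toC2, Complex.ext_iff] <;> ring
lemma toC2_mul (p q : Hq) : toC2 (p*q) = toC1 p * toC2 q + toC2 p * star (toC1 q) := by
  apply Complex.ext <;> simp [toC1, toC2, Complex.ext_iff] <;> ring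
@[simp] lemma toC1_toH (z : ℂ) : toC1 (toH z) = z := by simp [toC1, toH]
@[simp] lemma toC2_toH (z : ℂ) : toC2 (toH z) = 0 := by simp [toC2, toH, Complex.ext_iff]
@[simp] lemma toC1_zero : toC1 0 = 0 := by simp [toC1, Complex.ext_iff]; exact ⟨rfl, rfl⟩
@[simp] lemma toC2_zero : toC2 0 = 0 := by simp [toC2, Complex.ext_iff]; exact ⟨rfl, rfl⟩
lemma toC1_add (p q : Hq) : toC1 (p+q) = toC1 p + toC1 q := by simp [toC1, Complex.ext_iff]
lemma toC2_add (p q : Hq) : toC2 (p+q) = toC2 p + toC2 q := by simp [toC2, Complex.ext_iff]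
lemma toC1_sum {α} (s : Finset α) (f : α → Hq) : toC1 (∑ k ∈ s, f k) = ∑ k ∈ s, toC1 (f k) := by
  induction s using Finset.cons_induction with
  | empty => simp
  | cons a s ha ih => rw [Finset.sum_cons, Finset.sum_cons, toC1_add, ih]
lemma toC2_sum {α} (s : Finset α) (f : α → Hq) : toC2 (∑ k ∈ s, f k) = ∑ k ∈ s, toC2 (f k) := by
  induction s using Finset.cons_induction with
  | empty => simp
  | cons a s ha ih => rw [Finset.sum_cons, Finset.sum_cons, toC2_add, ih]


/-- A complex number is a right eigenvalue of a quaternionic matrix  iff it is an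
eigenvalue of the complex representation . -/
theorem right_eigenvalue_iff_chi {m : ℕ} (P : Matrix (Fin m) (Fin m) Hq) (lam : ℂ) :
    (∃ X : Fin m → Hq, X ≠ 0 ∧ P.mulVec X = fun i => X i * toH lam) ↔
      (∃ v : Fin m ⊕ Fin m → ℂ, v ≠ 0 ∧ (chi P).mulVec v = lam • v) := by
  constructor
  · rintro ⟨X, hX, hPX⟩
    refine ⟨Sum.elim (fun i => toC1 (X i)) (fun i => -star (toC2 (X i))), ?_, ?_⟩
    · intro hv
      apply hX
      funext i
      have h1 : toC1 (X i) = 0 := congrFun hv (Sum.inl i)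
      have h2 : -star (toC2 (X i)) = 0 := congrFun hv (Sum.inr i)
      rw [neg_eq_zero, star_eq_zero] at h2
      exact eq_zero_of_toC _ h1 h2
    · have hC1 : ∀ i, ∑ k, (toC1 (P i k) * toC1 (X k) - toC2 (P i k) * star (toC2 (X k)))
          = toC1 (X i) * lam := by
        intro i
        have h := congrArg toC1 (congrFun hPX i)
        rw [show P.mulVec X i = ∑ k, P i k * X k from rfl, toC1_sum] at h
        simpa [toC1_mul] using h
      have hC2 : ∀ i, ∑ k, (toC1 (P i k) * toC2 (X k) + toC2 (P i k) * star (toC1 (X k)))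
          = toC2 (X i) * star lam := by
        intro i
        have h := congrArg toC2 (congrFun hPX i)
        rw [show P.mulVec X i = ∑ k, P i k * X k from rfl, toC2_sum] at h
        simpa [toC2_mul] using h
      funext idx
      cases idx with
      | inl i =>
        have h := hC1 i
        rw [Finset.sum_sub_distrib] at h
        simp only [chi, Matrix.mulVec, dotProduct, Fintype.sum_sum_type,
          fromBlocks_apply₁₁, fromBlocks_apply₁₂, Matrix.map_apply, Sum.elim_inl, Sum.elim_inr,
          Pi.smul_apply, smul_eq_mul, mul_neg, Finset.sum_neg_distrib]
        linear_combination h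
      | inr i =>
        have h := congrArg (starRingEnd ℂ) (hC2 i)
        simp only [map_sum, map_add, _root_.map_mul, starRingEnd_apply, star_star] at h
        rw [Finset.sum_add_distrib] at h
        simp only [chi, Matrix.mulVec, dotProduct, Fintype.sum_sum_type,
          fromBlocks_apply₂₁, fromBlocks_apply₂₂, Matrix.map_apply, Matrix.neg_apply,
          Sum.elim_inl, Sum.elim_inr, Pi.smul_apply, smul_eq_mul, mul_neg, neg_mul,
          Finset.sum_neg_distrib]
        linear_combination -h
  · rintro ⟨v, hv, hMv⟩
    refine ⟨fun i => ofC (v (Sum.inl i)) (-star (v (Sum.inr i))), ?_, ?_⟩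
    · intro h0
      apply hv
      funext idx
      cases idx with
      | inl i =>
        have := congrArg toC1 (congrFun h0 i)
        simpa using this
      | inr i =>
        have := congrArg toC2 (congrFun h0 i)
        simp only [toC2_ofC, toC2_zero, Pi.zero_apply, neg_eq_zero, star_eq_zero] at this
        simpa using this
    · have htop : ∀ i, ∑ k, toC1 (P i k) * v (Sum.inl k) + ∑ k, toC2 (P i k) * v (Sum.inr k)
          = lam * v (Sum.inl i) := by
        intro i
        have h := congrFun hMv (Sum.inl i)
        simpa [chi, Matrix.mulVec, dotProduct, Fintype.sum_sum_type,
          fromBlocks_apply₁₁, fromBlocks_apply₁₂, Matrix.map_apply] using h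
      have hbot : ∀ i, ∑ k, -(star (toC2 (P i k)) * v (Sum.inl k))
          + ∑ k, star (toC1 (P i k)) * v (Sum.inr k) = lam * v (Sum.inr i) := by
        intro i
        have h := congrFun hMv (Sum.inr i)
        simpa [chi, Matrix.mulVec, dotProduct, Fintype.sum_sum_type,
          fromBlocks_apply₂₁, fromBlocks_apply₂₂, Matrix.map_apply, Matrix.neg_apply,
          neg_mul] using h
      funext i
      apply toC_ext
      · rw [show P.mulVec _ i = ∑ k, P i k * ofC (v (Sum.inl k)) (-star (v (Sum.inr k))) from rfl,
          toC1_sum]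
        simp only [toC1_mul, toC1_ofC, toC2_ofC, toC1_toH, toC2_toH, star_zero, mul_zero,
          sub_zero, star_neg, star_star, mul_neg, sub_neg_eq_add]
        rw [Finset.sum_add_distrib]
        linear_combination htop i
      · rw [show P.mulVec _ i = ∑ k, P i k * ofC (v (Sum.inl k)) (-star (v (Sum.inr k))) from rfl,
          toC2_sum]
        have h := congrArg (starRingEnd ℂ) (hbot i)
        simp only [map_sum, map_add, _root_.map_mul, map_neg, starRingEnd_apply, star_star,
          Finset.sum_neg_distrib] at h
        simp only [toC2_mul, toC1_ofC, toC2_ofC, toC1_toH, toC2_toH, mul_zero, zero_add,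
          mul_neg, neg_mul]
        rw [Finset.sum_add_distrib]
        simp only [Finset.sum_neg_distrib]
        linear_combination -h
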